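/- Let H be an infinite-dimensional Hilbert space and φ a bounded finite potent endomorphism of H whose nilpotency-related index i(φ) satisfies i(φ) ≥ 2. Then φ admits a non-trivial closed invariant subspace, i.e., there is a closed subspace L of H with L ≠ {0}, L ≠ H, and φ(L) ⊆ L. -/

import Mathlib

/-- Invariant Subspace Problem for bounded finite potent endomorphisms of index ≥ 2:
such an operator on an infinite-dimensional Hilbert space has a non-trivial closed
invariant subspace. -/
theorem invariant_subspace_of_finite_potent {H : Type*} [NormedAddCommGroup H]
    [InnerProductSpace ℂ H] [CompleteSpace H]
    (hinf : ¬ FiniteDimensional ℂ H)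
    (φ : H →ₗ[ℂ] H) (hb : Continuous ⇑φ)
    (W U : Submodule ℂ H) (hWU : IsCompl W U) [FiniteDimensional ℂ W]
    (hW : ∀ x ∈ W, φ x ∈ W) (hU : ∀ x ∈ U, φ x ∈ U)
    (hWa : Function.Bijective (φ.restrict hW))
    (hUn : IsNilpotent (φ.restrict hU))
    -- the index of `φ`, i.e. the nilpotency order of `φ|_U`, is at least 2
    (hidx : ∀ n : ℕ, (φ.restrict hU) ^ n = 0 → 2 ≤ n) :
    ∃ L : Submodule ℂ H, IsClosed (L : Set H) ∧ L ≠ ⊥ ∧ L ≠ ⊤ ∧ ∀ x ∈ L, φ x ∈ L := by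
  set ψ := φ.restrict hU with hψ
  obtain ⟨n, hn⟩ := hUn
  -- ψ ≠ 0
  have hψ0 : ψ ≠ 0 := by
    intro h
    have := hidx 1 (by simpa [h] using (pow_one ψ).symm ▸ (by simp [h] : ψ ^ 1 = 0))
    omega
  -- ψ is not injective
  have hnotinj : ¬ Function.Injective ψ := by
    intro hinj
    obtain ⟨u, hu⟩ : ∃ u : U, ψ u ≠ 0 := by
      by_contra h
      push_neg at h
      exact hψ0 (LinearMap.ext fun x => h x)
    have hinjn : Function.Injective (ψ ^ n) := by
      rw [Module.End.coe_pow]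
      exact Function.Injective.iterate hinj n
    have : u = 0 := by
      apply hinjn
      rw [hn]; simp
    exact hu (by simp [this])
  -- get a nonzero kernel element
  obtain ⟨a, b, hab, hne⟩ : ∃ a b : U, ψ a = ψ b ∧ a ≠ b := by
    by_contra h
    push_neg at h
    exact hnotinj fun a b hab => h a b hab
  set w : U := a - b with hw
  have hwne : w ≠ 0 := sub_ne_zero.mpr hne
  have hwk : ψ w = 0 := by simp [hw, map_sub, hab]
  -- φ (w : H) = 0
  have hφw : φ (w : H) = 0 := by
    have : ((ψ w : U) : H) = φ (w : H) := by
      simp [hψ, LinearMap.restrict_apply]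
    rw [hwk] at this
    simpa using this.symm
  refine ⟨LinearMap.ker φ, ?_, ?_, ?_, ?_⟩
  · have : ((LinearMap.ker φ : Submodule ℂ H) : Set H) = φ ⁻¹' {0} := by
      ext x; simp [LinearMap.mem_ker]
    rw [this]
    exact isClosed_singleton.preimage hb
  · intro h
    have : (w : H) ∈ LinearMap.ker φ := hφw
    rw [h, Submodule.mem_bot] at this
    exact hwne (Subtype.coe_injective (by simpa using this))
  · intro h
    obtain ⟨u, hu⟩ : ∃ u : U, ψ u ≠ 0 := by
      by_contra hc
      push_neg at hc
      exact hψ0 (LinearMap.ext fun x => hc x)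
    have hmem : (u : H) ∈ LinearMap.ker φ := by rw [h]; trivial
    have : φ (u : H) = 0 := hmem
    apply hu
    have : ((ψ u : U) : H) = 0 := by
      simp [hψ, LinearMap.restrict_apply, this]
    exact Subtype.coe_injective (by simpa using this)
  · intro x hx
    simp only [LinearMap.mem_ker] at hx ⊢
    rw [hx]; simp
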